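/- Let n ≥ 1 and s ≥ 3 be integers, let P_n(x) = (1/n!)·(d/dx)^n (x^n(1−x)^n) be the shifted Legendre polynomial, let Q_n(x) = (1−x)^n, and let T_n(x) = c₀ + c₁x + ⋯ + c_n x^n be a polynomial with real coefficients, with c* = max_{0 ≤ i ≤ n} |c_i|. Then the s-fold integral I_s = ∫₀¹⋯∫₀¹ P_n(x₁)Q_n(x₂)T_n(x₃)/(1 − x₁x₂x₃⋯x_s) dx₁⋯dx_s satisfies |I_s| ≤ (c*/2)·B(n, n+1), where B denotes the Euler Beta function. -/

import Mathlib

open MeasureTheory Finset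
open Polynomial intervalIntegral

/-- The shifted Legendre polynomial `P_n(x) = (1/n!) (d/dx)^n (x^n (1-x)^n)`. -/
noncomputable def shiftedLegendre (n : ℕ) (x : ℝ) : ℝ :=
  (1 / (n.factorial : ℝ)) * iteratedDeriv n (fun y : ℝ => y ^ n * (1 - y) ^ n) x

/-- The Euler Beta function `B(x, y) = Γ(x)Γ(y)/Γ(x+y)`. -/
noncomputable def eulerBeta (x y : ℝ) : ℝ :=
  Real.Gamma x * Real.Gamma y / Real.Gamma (x + y)

lemma beta_nat (n : ℕ) : ∀ k : ℕ, ∫ x in (0:ℝ)..1, x ^ k * (1 - x) ^ n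
    = (k.factorial * n.factorial : ℝ) / (k + n + 1).factorial := by
  induction n with
  | zero =>
    intro k
    have hpos : (0:ℝ) < (k.factorial : ℝ) := by positivity
    simp [integral_pow, Nat.factorial_succ]
    field_simp
  | succ n ih =>
    intro k
    have h1 : ∫ x in (0:ℝ)..1, x ^ k * (1 - x) ^ (n+1)
        = (∫ x in (0:ℝ)..1, x ^ k * (1 - x) ^ n) - ∫ x in (0:ℝ)..1, x ^ (k+1) * (1 - x) ^ n := by
      rw [← intervalIntegral.integral_sub
        (Continuous.intervalIntegrable (by continuity) _ _)
        (Continuous.intervalIntegrable (by continuity) _ _)]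
      apply intervalIntegral.integral_congr
      intro x _
      ring
    rw [h1, ih k, ih (k+1)]
    have e1 : k + (n+1) + 1 = (k + n + 1) + 1 := by omega
    have e2 : (k+1) + n + 1 = (k + n + 1) + 1 := by omega
    rw [e1, e2]
    have hpos : (0:ℝ) < ((k + n + 1).factorial : ℝ) := by positivity
    rw [Nat.factorial_succ (k+n+1), Nat.factorial_succ k, Nat.factorial_succ n]
    push_cast
    field_simp
    ring

lemma iteratedDeriv_polyeval (m : ℕ) (p : ℝ[X]) :
    iteratedDeriv m (fun y : ℝ => p.eval y) = fun y : ℝ => ((Polynomial.derivative)^[m] p).eval y := by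
  induction m generalizing p with
  | zero => simp
  | succ m ih =>
    rw [iteratedDeriv_succ, ih p, Function.iterate_succ_apply']
    funext y
    exact (Polynomial.hasDerivAt _ y).deriv

lemma boundary_zero (n m : ℕ) (hm : m < n) (y : ℝ) (hy : y = 0 ∨ y = 1) :
    ((Polynomial.derivative)^[m] ((X:ℝ[X])^n * (1-X)^n)).eval y = 0 := by
  rcases hy with hy | hy
  · obtain ⟨q, hq⟩ := Polynomial.pow_sub_dvd_iterate_derivative_of_pow_dvd m
      (dvd_mul_right ((X:ℝ[X])^n) ((1-X)^n))
    rw [hq, hy]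
    simp [Nat.sub_ne_zero_of_lt hm, zero_pow]
  · obtain ⟨q, hq⟩ := Polynomial.pow_sub_dvd_iterate_derivative_of_pow_dvd m
      (dvd_mul_left ((1-X:ℝ[X])^n) ((X:ℝ[X])^n))
    rw [hq, hy]
    simp [Nat.sub_ne_zero_of_lt hm, zero_pow]

lemma ibp_once (n m : ℕ) (hm : m < n) (q : ℝ[X]) :
    ∫ x in (0:ℝ)..1, ((Polynomial.derivative)^[m+1] ((X:ℝ[X])^n * (1-X)^n)).eval x * q.eval x
      = - ∫ x in (0:ℝ)..1,
          ((Polynomial.derivative)^[m] ((X:ℝ[X])^n * (1-X)^n)).eval x * (derivative q).eval x := by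
  have h := intervalIntegral.integral_mul_deriv_eq_deriv_mul
    (u := fun x : ℝ => ((Polynomial.derivative)^[m] ((X:ℝ[X])^n * (1-X)^n)).eval x)
    (u' := fun x : ℝ => ((Polynomial.derivative)^[m+1] ((X:ℝ[X])^n * (1-X)^n)).eval x)
    (v := fun x : ℝ => q.eval x)
    (v' := fun x : ℝ => (derivative q).eval x)
    (a := 0) (b := 1)
    (fun x _ => by
      have := Polynomial.hasDerivAt ((Polynomial.derivative)^[m] ((X:ℝ[X])^n * (1-X)^n)) x
      rwa [← Function.iterate_succ_apply' Polynomial.derivative m ((X:ℝ[X])^n * (1-X)^n)] at this)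
    (fun x _ => Polynomial.hasDerivAt q x)
    ((Polynomial.continuous _).intervalIntegrable _ _)
    ((Polynomial.continuous _).intervalIntegrable _ _)
  simp only [boundary_zero n m hm 0 (Or.inl rfl), boundary_zero n m hm 1 (Or.inr rfl),
    zero_mul, sub_zero, zero_sub] at h
  linarith [h]

lemma ibp_iter (n : ℕ) (q : ℝ[X]) : ∀ j, j ≤ n →
    ∫ x in (0:ℝ)..1, ((Polynomial.derivative)^[n] ((X:ℝ[X])^n * (1-X)^n)).eval x * q.eval x
      = (-1:ℝ)^j * ∫ x in (0:ℝ)..1,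
          ((Polynomial.derivative)^[n-j] ((X:ℝ[X])^n * (1-X)^n)).eval x
            * ((Polynomial.derivative)^[j] q).eval x := by
  intro j
  induction j with
  | zero => intro _; simp
  | succ j ih =>
    intro hj
    rw [ih (by omega)]
    have hnm : n - j = (n - (j+1)) + 1 := by omega
    rw [hnm, ibp_once n (n - (j+1)) (by omega) _, Function.iterate_succ_apply']
    ring

lemma shiftedLegendre_eq_poly (n : ℕ) (x : ℝ) :
    shiftedLegendre n x
      = (1 / (n.factorial : ℝ))
        * ((Polynomial.derivative)^[n] ((X:ℝ[X])^n * (1-X)^n)).eval x := by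
  unfold _root_.shiftedLegendre
  congr 1
  have : (fun y : ℝ => y ^ n * (1 - y) ^ n)
      = fun y : ℝ => ((X:ℝ[X])^n * (1-X)^n).eval y := by
    funext y; simp
  rw [this, iteratedDeriv_polyeval]

lemma shiftedLegendre_continuous (n : ℕ) : Continuous (shiftedLegendre n) := by
  have : _root_.shiftedLegendre n = fun x => (1 / (n.factorial : ℝ))
      * ((Polynomial.derivative)^[n] ((X:ℝ[X])^n * (1-X)^n)).eval x := by
    funext x; exact shiftedLegendre_eq_poly n x
  rw [this]
  exact continuous_const.mul (Polynomial.continuous _)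

lemma legendre_integral (n k : ℕ) :
    ∫ x in (0:ℝ)..1, shiftedLegendre n x * x ^ k
      = (-1:ℝ)^n * (k.choose n)
        * ∫ x in (0:ℝ)..1, x ^ (n + (k - n)) * (1 - x) ^ n := by
  have h1 : ∫ x in (0:ℝ)..1, shiftedLegendre n x * x ^ k
      = (1 / (n.factorial : ℝ)) * ∫ x in (0:ℝ)..1,
          ((Polynomial.derivative)^[n] ((X:ℝ[X])^n * (1-X)^n)).eval x * (X^k : ℝ[X]).eval x := by
    rw [← intervalIntegral.integral_const_mul]
    apply intervalIntegral.integral_congr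
    intro x _
    show shiftedLegendre n x * x ^ k = _
    rw [shiftedLegendre_eq_poly n x]
    simp; ring
  rw [h1, ibp_iter n (X^k) n le_rfl, Nat.sub_self]
  have h2 : ∫ x in (0:ℝ)..1,
      ((Polynomial.derivative)^[0] ((X:ℝ[X])^n * (1-X)^n)).eval x
        * ((Polynomial.derivative)^[n] ((X:ℝ[X])^k)).eval x
      = (k.descFactorial n : ℝ) * ∫ x in (0:ℝ)..1, x ^ (n + (k - n)) * (1 - x) ^ n := by
    rw [← intervalIntegral.integral_const_mul]
    apply intervalIntegral.integral_congr
    intro x _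
    show _ = (k.descFactorial n : ℝ) * (x ^ (n + (k - n)) * (1 - x) ^ n)
    rw [Polynomial.iterate_derivative_X_pow_eq_smul]
    simp [pow_add]
    ring
  rw [h2, Nat.descFactorial_eq_factorial_mul_choose]
  have hfac : (0:ℝ) < (n.factorial : ℝ) := by positivity
  push_cast
  field_simp

lemma nat_ineq1 (n k : ℕ) : k.choose n * (k.factorial * n.factorial) * (k+n+1)
    ≤ (k+n+1).factorial := by
  have h1 : (k+n+1).factorial = (k+n+1) * (k+n).factorial := Nat.factorial_succ _
  have h2 : (k+n).choose n * n.factorial * k.factorial = (k+n).factorial := by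
    have := Nat.choose_mul_factorial_mul_factorial (show n ≤ k + n by omega)
    simpa [Nat.add_sub_cancel] using this
  have h3 : k.choose n ≤ (k+n).choose n := Nat.choose_le_choose n (by omega)
  calc k.choose n * (k.factorial * n.factorial) * (k+n+1)
      ≤ (k+n).choose n * (k.factorial * n.factorial) * (k+n+1) := by
        exact Nat.mul_le_mul_right _ (Nat.mul_le_mul_right _ h3)
    _ = (k+n+1) * ((k+n).choose n * n.factorial * k.factorial) := by ring
    _ = (k+n+1).factorial := by rw [h2, ← h1]

lemma nat_ineq2 (n : ℕ) (hn : 1 ≤ n) : ∀ k, n ≤ k →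
    2 * (2*n).factorial * k.factorial * (k+2)
      ≤ (n-1).factorial * ((k+n+1) * (k+n+1).factorial) := by
  obtain ⟨m, rfl⟩ : ∃ m, n = m + 1 := ⟨n-1, by omega⟩
  intro k hk
  induction k, hk using Nat.le_induction with
  | base =>
    have e1 : 2*(m+1) = (2*m+1)+1 := by ring
    have e2 : m+1+(m+1)+1 = (2*m+1)+1+1 := by ring
    have e3 : (m+1)-1 = m := by omega
    rw [e1, e2, e3, Nat.factorial_succ ((2*m+1)+1), Nat.factorial_succ (2*m+1),
      Nat.factorial_succ m]
    have key : 2*((m+1)*(m+3)) ≤ (2*m+3)*(2*m+3) := by nlinarith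
    calc 2 * ((2*m+1+1) * (2*m+1).factorial) * ((m+1) * m.factorial) * (m+1+2)
        = (m.factorial * (2*m+1).factorial * (2*m+2)) * (2*((m+1)*(m+3))) := by ring
      _ ≤ (m.factorial * (2*m+1).factorial * (2*m+2)) * ((2*m+3)*(2*m+3)) :=
          Nat.mul_le_mul_left _ key
      _ = m.factorial * ((2*m+1+1+1) * ((2*m+1+1+1) * ((2*m+1+1) * (2*m+1).factorial))) := by ring
  | succ k hk ih =>
    have hpos : 0 < (k+2) * (k+(m+1)+1) := by positivity
    apply Nat.le_of_mul_le_mul_right _ hpos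
    have H : 2 * (2*(m+1)).factorial * k.factorial * (k+2) * ((k+1)*(k+3)*(k+(m+1)+1))
        ≤ (m+1-1).factorial * ((k+(m+1)+1) * (k+(m+1)+1).factorial)
            * ((k+1)*(k+3)*(k+(m+1)+1)) :=
      Nat.mul_le_mul_right _ ih
    have poly : (k+(m+1)+1)*((k+1)*(k+3)) ≤ (k+(m+1)+2)*(k+(m+1)+2)*(k+2) := by nlinarith
    have H2 : (m+1-1).factorial * ((k+(m+1)+1) * (k+(m+1)+1).factorial)
          * ((k+1)*(k+3)*(k+(m+1)+1))
        ≤ (m+1-1).factorial * ((k+1+(m+1)+1) * (k+1+(m+1)+1).factorial)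
            * ((k+2)*(k+(m+1)+1)) := by
      have e4 : k+1+(m+1)+1 = (k+(m+1)+1)+1 := by ring
      rw [e4, Nat.factorial_succ (k+(m+1)+1)]
      calc (m+1-1).factorial * ((k+(m+1)+1) * (k+(m+1)+1).factorial)
            * ((k+1)*(k+3)*(k+(m+1)+1))
          = ((m+1-1).factorial * (k+(m+1)+1).factorial * (k+(m+1)+1))
              * ((k+(m+1)+1)*((k+1)*(k+3))) := by ring
        _ ≤ ((m+1-1).factorial * (k+(m+1)+1).factorial * (k+(m+1)+1))
              * ((k+(m+1)+2)*(k+(m+1)+2)*(k+2)) := Nat.mul_le_mul_left _ poly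
        _ = (m+1-1).factorial * ((k+(m+1)+1)+1) * ((((k+(m+1)+1)+1)) * (k+(m+1)+1).factorial)
              * ((k+2)*(k+(m+1)+1)) := by ring
        _ = _ := by ring
    calc 2 * (2*(m+1)).factorial * (k+1).factorial * (k+1+2) * ((k+2)*(k+(m+1)+1))
        = 2 * (2*(m+1)).factorial * k.factorial * (k+2) * ((k+1)*(k+3)*(k+(m+1)+1)) := by
          rw [Nat.factorial_succ k]; ring
      _ ≤ _ := le_trans H H2

lemma key_real (n k : ℕ) (hn : 1 ≤ n) (hk : n ≤ k) :
    (k.choose n : ℝ) * ((k.factorial * n.factorial : ℝ) / (k+n+1).factorial)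
      * ((k.factorial * n.factorial : ℝ) / (k+n+1).factorial) * (k+2)
    ≤ ((n-1).factorial * n.factorial / (2*n).factorial : ℝ) / 2 := by
  set bk : ℝ := (k.factorial * n.factorial : ℝ) / (k+n+1).factorial with hbk
  have hfacpos : (0:ℝ) < ((k+n+1).factorial : ℝ) := by positivity
  have hbkpos : 0 ≤ bk := by positivity
  have h1 : (k.choose n : ℝ) * bk ≤ 1 / ((k:ℝ)+n+1) := by
    rw [hbk, ← mul_div_assoc, div_le_div_iff₀ hfacpos (by positivity), one_mul]
    have := nat_ineq1 n k
    have hcast : (k.choose n : ℝ) * (k.factorial * n.factorial) * ((k:ℝ)+n+1)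
        ≤ ((k+n+1).factorial : ℝ) := by exact_mod_cast this
    exact hcast
  have h2 : bk * (k+2) ≤ (((n-1).factorial * n.factorial / (2*n).factorial : ℝ) / 2)
      * (k+n+1) := by
    have := nat_ineq2 n hn k hk
    have hcast : 2 * ((2*n).factorial : ℝ) * k.factorial * (k+2)
        ≤ ((n-1).factorial : ℝ) * ((k+n+1) * (k+n+1).factorial) := by exact_mod_cast this
    have h2npos : (0:ℝ) < ((2*n).factorial : ℝ) := by positivity
    rw [hbk, div_mul_eq_mul_div, div_le_iff₀ hfacpos, div_div, div_mul_eq_mul_div,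
      div_mul_eq_mul_div, le_div_iff₀ (by positivity)]
    nlinarith [Nat.factorial_pos n, hcast, mul_pos h2npos hfacpos]
  have hknpos : (0:ℝ) < (k:ℝ)+n+1 := by positivity
  have hchoosebk : 0 ≤ (k.choose n : ℝ) * bk := by positivity
  calc (k.choose n : ℝ) * bk * bk * (k+2) = ((k.choose n : ℝ) * bk) * (bk * (k+2)) := by ring
    _ ≤ (1/((k:ℝ)+n+1)) * ((((n-1).factorial * n.factorial / (2*n).factorial : ℝ) / 2)
          * (k+n+1)) := by
        apply mul_le_mul h1 h2 (by positivity) (by positivity)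
    _ = ((n-1).factorial * n.factorial / (2*n).factorial : ℝ) / 2 := by
        field_simp

lemma eulerBeta_nat (n : ℕ) (hn : 1 ≤ n) :
    eulerBeta n (n+1) = ((n-1).factorial * n.factorial / (2*n).factorial : ℝ) := by
  unfold eulerBeta
  have e1 : (n:ℝ) = ((n-1 : ℕ) : ℝ) + 1 := by
    have : n - 1 + 1 = n := by omega
    rw [← this]; push_cast; ring
  have e2 : (n:ℝ) + ((n:ℝ)+1) = ((2*n : ℕ) : ℝ) + 1 := by push_cast; ring
  rw [e2, Real.Gamma_nat_eq_factorial (2*n)]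
  have e3 : Real.Gamma ((n:ℝ)+1) = n.factorial := Real.Gamma_nat_eq_factorial n
  rw [e3, e1, Real.Gamma_nat_eq_factorial (n-1)]

lemma telescoping (n : ℕ) :
    HasSum (fun j : ℕ => 1/((n:ℝ)+j+1) - 1/((n:ℝ)+j+2)) (1/((n:ℝ)+1)) := by
  have hnn : ∀ j : ℕ, 0 ≤ 1/((n:ℝ)+j+1) - 1/((n:ℝ)+j+2) := by
    intro j
    have h1 : (0:ℝ) < (n:ℝ)+j+1 := by positivity
    have h2 : ((n:ℝ)+j+1) ≤ (n:ℝ)+j+2 := by linarith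
    have := one_div_le_one_div_of_le h1 h2
    linarith
  rw [hasSum_iff_tendsto_nat_of_nonneg hnn]
  have hps : ∀ m : ℕ, ∑ j ∈ range m, (1/((n:ℝ)+j+1) - 1/((n:ℝ)+j+2))
      = 1/((n:ℝ)+1) - 1/((n:ℝ)+m+1) := by
    intro m
    have := Finset.sum_range_sub' (fun j : ℕ => 1/((n:ℝ)+j+1)) m
    rw [show (1:ℝ)/((n:ℝ)+1) - 1/((n:ℝ)+m+1) = 1/((n:ℝ)+(0:ℕ)+1) - 1/((n:ℝ)+m+1) by norm_num,
      ← this]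
    apply Finset.sum_congr rfl
    intro j _
    push_cast
    ring_nf
  simp only [hps]
  have h0 : Filter.Tendsto (fun m : ℕ => 1/((n:ℝ)+m+1)) Filter.atTop (nhds 0) := by
    simp only [one_div]
    apply Filter.Tendsto.comp tendsto_inv_atTop_zero
    apply Filter.tendsto_atTop_add_const_right
    apply Filter.tendsto_atTop_add_const_left
    exact tendsto_natCast_atTop_atTop
  have := Filter.Tendsto.sub (tendsto_const_nhds (x := 1/((n:ℝ)+1))) h0
  simpa using this

lemma setIcc_eq (f : ℝ → ℝ) : ∫ y in Set.Icc (0:ℝ) 1, f y = ∫ y in (0:ℝ)..1, f y := by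
  rw [intervalIntegral.integral_of_le zero_le_one, MeasureTheory.integral_Icc_eq_integral_Ioc]

lemma prod_three {s : ℕ} (hs : 3 ≤ s) (v : Fin s → ℝ)
    (h : ∀ i : Fin s, 3 ≤ (i : ℕ) → v i = 1) :
    ∏ i, v i = v ⟨0, by omega⟩ * v ⟨1, by omega⟩ * v ⟨2, by omega⟩ := by
  set i0 : Fin s := ⟨0, by omega⟩
  set i1 : Fin s := ⟨1, by omega⟩
  set i2 : Fin s := ⟨2, by omega⟩
  have h01 : i0 ≠ i1 := by simp [i0, i1, Fin.ext_iff]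
  have h02 : i0 ≠ i2 := by simp [i0, i2, Fin.ext_iff]
  have h12 : i1 ≠ i2 := by simp [i1, i2, Fin.ext_iff]
  have key : ∏ i ∈ ({i0, i1, i2} : Finset (Fin s)), v i = ∏ i, v i := by
    apply Finset.prod_subset (Finset.subset_univ _)
    intro x _ hx
    apply h
    simp only [Finset.mem_insert, Finset.mem_singleton, not_or] at hx
    obtain ⟨hx0, hx1, hx2⟩ := hx
    by_contra hlt
    push_neg at hlt
    interval_cases hval : (x : ℕ)
    · exact hx0 (by simp [i0, Fin.ext_iff, hval])
    · exact hx1 (by simp [i1, Fin.ext_iff, hval])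
    · exact hx2 (by simp [i2, Fin.ext_iff, hval])
  rw [← key]
  rw [Finset.prod_insert (by simp [h01, h02]), Finset.prod_insert (by simp [h12]),
    Finset.prod_singleton, mul_assoc]

noncomputable def baseFn (n : ℕ) (c : ℕ → ℝ) {s : ℕ} (i : Fin s) : ℝ → ℝ :=
  if (i:ℕ) = 0 then shiftedLegendre n
  else if (i:ℕ) = 1 then fun y => (1-y)^n
  else if (i:ℕ) = 2 then fun y => ∑ j ∈ range (n+1), c j * y^j
  else fun _ => 1

noncomputable def Hfn (n : ℕ) (c : ℕ → ℝ) {s : ℕ} (k : ℕ) (i : Fin s) : ℝ → ℝ :=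
  (Set.Icc (0:ℝ) 1).indicator (fun y => baseFn n c i y * y^k)

noncomputable def Gfn (n : ℕ) (c : ℕ → ℝ) (s : ℕ) (k : ℕ) (x : Fin s → ℝ) : ℝ :=
  ∏ i, Hfn n c k i (x i)

lemma baseFn_cont (n : ℕ) (c : ℕ → ℝ) {s : ℕ} (i : Fin s) : Continuous (baseFn n c i) := by
  unfold baseFn
  split_ifs
  · exact shiftedLegendre_continuous n
  · continuity
  · apply continuous_finset_sum
    intro j _
    continuity
  · exact continuous_const

lemma Gfn_eq_indicator (n : ℕ) (c : ℕ → ℝ) (s : ℕ) (k : ℕ) :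
    Gfn n c s k = (Set.Icc (0 : Fin s → ℝ) 1).indicator
      (fun x => ∏ i, baseFn n c i (x i) * (x i)^k) := by
  funext x
  by_cases hx : x ∈ Set.Icc (0 : Fin s → ℝ) 1
  · rw [Set.indicator_of_mem hx]
    obtain ⟨hx0, hx1⟩ := hx
    unfold Gfn Hfn
    apply Finset.prod_congr rfl
    intro i _
    exact Set.indicator_of_mem (Set.mem_Icc.mpr ⟨hx0 i, hx1 i⟩) _
  · rw [Set.indicator_of_notMem hx]
    have : ∃ i, x i ∉ Set.Icc (0:ℝ) 1 := by
      by_contra hc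
      push_neg at hc
      exact hx (Set.mem_Icc.mpr ⟨fun i => (hc i).1, fun i => (hc i).2⟩)
    obtain ⟨i, hi⟩ := this
    unfold Gfn Hfn
    apply Finset.prod_eq_zero (Finset.mem_univ i)
    exact Set.indicator_of_notMem hi _

lemma Gfn_integrable (n : ℕ) (c : ℕ → ℝ) (s : ℕ) (k : ℕ) :
    MeasureTheory.Integrable (Gfn n c s k) := by
  rw [Gfn_eq_indicator]
  apply MeasureTheory.IntegrableOn.integrable_indicator _ measurableSet_Icc
  apply ContinuousOn.integrableOn_compact isCompact_Icc
  apply Continuous.continuousOn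
  apply continuous_finset_prod
  intro i _
  exact ((baseFn_cont n c i).comp (continuous_apply i)).mul ((continuous_apply i).pow k)

lemma Hfn_integral_eq (n : ℕ) (c : ℕ → ℝ) {s : ℕ} (k : ℕ) (i : Fin s) :
    ∫ y : ℝ, Hfn n c k i y = ∫ y in (0:ℝ)..1, baseFn n c i y * y^k := by
  unfold Hfn
  rw [MeasureTheory.integral_indicator measurableSet_Icc, setIcc_eq]

lemma Hfn_int_i0 (n : ℕ) (c : ℕ → ℝ) {s : ℕ} (k : ℕ) (i : Fin s) (hi : (i:ℕ) = 0) :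
    ∫ y : ℝ, Hfn n c k i y
      = (-1:ℝ)^n * (k.choose n) * ∫ x in (0:ℝ)..1, x ^ (n + (k - n)) * (1 - x) ^ n := by
  rw [Hfn_integral_eq]
  simp only [baseFn, hi, if_true]
  exact legendre_integral n k

lemma Hfn_int_i1 (n : ℕ) (c : ℕ → ℝ) {s : ℕ} (k : ℕ) (i : Fin s) (hi : (i:ℕ) = 1) :
    ∫ y : ℝ, Hfn n c k i y = (k.factorial * n.factorial : ℝ) / (k + n + 1).factorial := by
  rw [Hfn_integral_eq]
  simp only [baseFn, hi]
  norm_num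
  rw [← beta_nat n k]
  apply intervalIntegral.integral_congr
  intro y _
  ring

lemma Hfn_int_i2 (n : ℕ) (c : ℕ → ℝ) {s : ℕ} (k : ℕ) (i : Fin s) (hi : (i:ℕ) = 2)
    (C : ℝ) (hC : ∀ j ∈ range (n+1), |c j| ≤ C) :
    |∫ y : ℝ, Hfn n c k i y| ≤ C * (n+1) * (1/((k:ℝ)+1)) := by
  rw [Hfn_integral_eq]
  simp only [baseFn, hi]
  norm_num
  have hrw : ∫ y in (0:ℝ)..1, (∑ j ∈ range (n+1), c j * y^j) * y^k
      = ∑ j ∈ range (n+1), c j * (1/((j:ℝ)+k+1)) := by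
    have h1 : ∀ y : ℝ, (∑ j ∈ range (n+1), c j * y^j) * y^k
        = ∑ j ∈ range (n+1), c j * y^(j+k) := by
      intro y
      rw [Finset.sum_mul]
      apply Finset.sum_congr rfl
      intro j _
      rw [pow_add]; ring
    simp_rw [h1]
    rw [intervalIntegral.integral_finset_sum]
    · apply Finset.sum_congr rfl
      intro j _
      rw [intervalIntegral.integral_const_mul, integral_pow]
      norm_num
    · intro j _
      exact ((continuous_const.mul (continuous_pow (j+k))).intervalIntegrable _ _)
  rw [hrw]
  have hC0 : 0 ≤ C := le_trans (abs_nonneg _) (hC 0 (by simp))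
  calc |∑ j ∈ range (n+1), c j * (1/((j:ℝ)+k+1))|
      ≤ ∑ j ∈ range (n+1), |c j * (1/((j:ℝ)+k+1))| := Finset.abs_sum_le_sum_abs _ _
    _ ≤ ∑ j ∈ range (n+1), C * (1/((k:ℝ)+1)) := by
        apply Finset.sum_le_sum
        intro j hj
        rw [abs_mul]
        apply mul_le_mul (hC j hj) _ (abs_nonneg _) hC0
        rw [abs_of_pos (by positivity)]
        apply div_le_div_of_nonneg_left one_pos.le (by positivity) (by push_cast; linarith [Nat.cast_nonneg (α := ℝ) j])
    _ = C * (n+1) * (1/((k:ℝ)+1)) := by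
        rw [Finset.sum_const, Finset.card_range]
        push_cast; ring
    _ = C * ((n:ℝ)+1) * (((k:ℝ)+1))⁻¹ := by rw [one_div]
  
lemma Hfn_int_other (n : ℕ) (c : ℕ → ℝ) {s : ℕ} (k : ℕ) (i : Fin s) (hi : 3 ≤ (i:ℕ)) :
    ∫ y : ℝ, Hfn n c k i y = 1/((k:ℝ)+1) := by
  rw [Hfn_integral_eq]
  have h0 : ¬ ((i:ℕ) = 0) := by omega
  have h1 : ¬ ((i:ℕ) = 1) := by omega
  have h2 : ¬ ((i:ℕ) = 2) := by omega
  simp only [baseFn, h0, h1, h2, if_false]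
  simp only [one_mul]
  rw [integral_pow]
  norm_num

lemma baseFn_bound (n : ℕ) (c : ℕ → ℝ) (s : ℕ) : ∃ M : ℝ, 1 ≤ M ∧
    ∀ (i : Fin s), ∀ y ∈ Set.Icc (0:ℝ) 1, |baseFn n c i y| ≤ M := by
  obtain ⟨MP, hMP⟩ := isCompact_Icc.exists_bound_of_continuousOn
    (f := shiftedLegendre n) (s := Set.Icc (0:ℝ) 1)
    ((shiftedLegendre_continuous n).continuousOn)
  set MT : ℝ := ∑ j ∈ range (n+1), |c j| with hMT
  have hMT0 : 0 ≤ MT := Finset.sum_nonneg fun j _ => abs_nonneg _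
  refine ⟨max 1 (max MP MT), le_max_left _ _, ?_⟩
  intro i y hy
  have hy0 := hy.1
  have hy1 := hy.2
  unfold baseFn
  split_ifs
  · calc |shiftedLegendre n y| ≤ MP := hMP y hy
      _ ≤ max 1 (max MP MT) := le_trans (le_max_left _ _) (le_max_right _ _)
  · have h1 : 0 ≤ 1 - y := by linarith
    have h2 : 1 - y ≤ 1 := by linarith
    calc |(1-y)^n| = (1-y)^n := abs_of_nonneg (pow_nonneg h1 n)
      _ ≤ 1 := pow_le_one₀ h1 h2
      _ ≤ max 1 (max MP MT) := le_max_left _ _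
  · calc |∑ j ∈ range (n+1), c j * y^j| ≤ ∑ j ∈ range (n+1), |c j * y^j| :=
        Finset.abs_sum_le_sum_abs _ _
      _ ≤ ∑ j ∈ range (n+1), |c j| := by
          apply Finset.sum_le_sum
          intro j _
          rw [abs_mul]
          calc |c j| * |y^j| ≤ |c j| * 1 := by
                apply mul_le_mul_of_nonneg_left _ (abs_nonneg _)
                rw [abs_of_nonneg (pow_nonneg hy0 j)]
                exact pow_le_one₀ hy0 hy1
            _ = |c j| := mul_one _
      _ ≤ max 1 (max MP MT) := le_trans (le_max_right _ _) (le_max_right _ _)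
  · simp

lemma Hfn_norm_int_le (n : ℕ) (c : ℕ → ℝ) {s : ℕ} (k : ℕ) (i : Fin s) (M : ℝ) (hM : 0 ≤ M)
    (hbase : ∀ y ∈ Set.Icc (0:ℝ) 1, |baseFn n c i y| ≤ M) :
    ∫ y : ℝ, |Hfn n c k i y| ≤ M * (1/((k:ℝ)+1)) := by
  have habs : (fun y : ℝ => |Hfn n c k i y|)
      = (Set.Icc (0:ℝ) 1).indicator (fun y => |baseFn n c i y * y^k|) := by
    funext y
    unfold Hfn
    rw [Set.indicator_apply, Set.indicator_apply]
    split_ifs <;> simp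
  rw [habs, MeasureTheory.integral_indicator measurableSet_Icc]
  have hle : ∫ y in Set.Icc (0:ℝ) 1, |baseFn n c i y * y^k|
      ≤ ∫ y in Set.Icc (0:ℝ) 1, M * y^k := by
    apply MeasureTheory.setIntegral_mono_on
    · apply (Continuous.abs ((baseFn_cont n c i).mul (continuous_pow k))).integrableOn_Icc
    · exact (continuous_const.mul (continuous_pow k)).integrableOn_Icc
    · exact measurableSet_Icc
    · intro y hy
      rw [abs_mul, abs_of_nonneg (pow_nonneg hy.1 k)]
      exact mul_le_mul_of_nonneg_right (hbase y hy) (pow_nonneg hy.1 k)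
  calc ∫ y in Set.Icc (0:ℝ) 1, |baseFn n c i y * y^k| ≤ ∫ y in Set.Icc (0:ℝ) 1, M * y^k := hle
    _ = M * (1/((k:ℝ)+1)) := by
        rw [setIcc_eq, intervalIntegral.integral_const_mul, integral_pow]
        norm_num

lemma Hfn_norm_int_nonneg (n : ℕ) (c : ℕ → ℝ) {s : ℕ} (k : ℕ) (i : Fin s) :
    0 ≤ ∫ y : ℝ, |Hfn n c k i y| :=
  MeasureTheory.integral_nonneg fun y => abs_nonneg _

lemma Gfn_norm_int (n : ℕ) (c : ℕ → ℝ) (s : ℕ) (k : ℕ) :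
    ∫ x : Fin s → ℝ, ‖Gfn n c s k x‖ = ∏ i : Fin s, ∫ y : ℝ, |Hfn n c k i y| := by
  rw [← MeasureTheory.integral_fintype_prod_eq_prod (ι := Fin s)
    (f := fun i y => |Hfn n c k i y|)]
  congr 1
  funext x
  rw [Real.norm_eq_abs]
  exact Finset.abs_prod _ _

lemma Gfn_int (n : ℕ) (c : ℕ → ℝ) (s : ℕ) (k : ℕ) :
    ∫ x : Fin s → ℝ, Gfn n c s k x = ∏ i : Fin s, ∫ y : ℝ, Hfn n c k i y :=
  MeasureTheory.integral_fintype_prod_eq_prod (ι := Fin s) (f := fun i y => Hfn n c k i y)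

lemma summable_one_div_sq : Summable (fun k : ℕ => (1/((k:ℝ)+1))^2) := by
  have h := Real.summable_one_div_nat_pow.mpr (show 1 < 2 by norm_num)
  have h2 := (summable_nat_add_iff 1).mpr h
  apply h2.congr
  intro k
  push_cast
  rw [div_pow]
  norm_num

lemma Gfn_summable (n : ℕ) (c : ℕ → ℝ) (s : ℕ) (hs : 3 ≤ s) :
    Summable (fun k => ∫ x : Fin s → ℝ, ‖Gfn n c s k x‖) := by
  obtain ⟨M, hM1, hM⟩ := baseFn_bound n c s
  have hM0 : 0 ≤ M := le_trans zero_le_one hM1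
  have hnn : ∀ k : ℕ, 0 ≤ ∫ x : Fin s → ℝ, ‖Gfn n c s k x‖ :=
    fun k => MeasureTheory.integral_nonneg fun x => norm_nonneg _
  have hsum : Summable (fun k : ℕ => M^s * (1/((k:ℝ)+1))^2) :=
    (summable_one_div_sq).mul_left _
  refine Summable.of_nonneg_of_le hnn (fun k => ?_) hsum
  ·
    rw [Gfn_norm_int]
    have hkle : (1/((k:ℝ)+1)) ≤ 1 := by
      rw [div_le_one (by positivity)]
      linarith [Nat.cast_nonneg (α := ℝ) k]
    have hk0 : 0 ≤ (1/((k:ℝ)+1)) := by positivity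
    calc ∏ i, ∫ y : ℝ, |Hfn n c k i y|
        ≤ ∏ _i : Fin s, M * (1/((k:ℝ)+1)) := by
          apply Finset.prod_le_prod (fun i _ => Hfn_norm_int_nonneg n c k i)
          exact fun i _ => Hfn_norm_int_le n c k i M hM0 (hM i)
      _ = M^s * (1/((k:ℝ)+1))^s := by
          rw [Finset.prod_const, Finset.card_univ, Fintype.card_fin, mul_pow]
      _ ≤ M^s * (1/((k:ℝ)+1))^2 := by
          apply mul_le_mul_of_nonneg_left _ (pow_nonneg hM0 s)
          exact pow_le_pow_of_le_one hk0 hkle (by omega)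

lemma indicator_ae (n : ℕ) (c : ℕ → ℝ) (s : ℕ) (hs : 3 ≤ s) :
    (Set.Icc (0 : Fin s → ℝ) 1).indicator
      (fun x => shiftedLegendre n (x ⟨0, by omega⟩) * (1 - x ⟨1, by omega⟩) ^ n *
          (∑ i ∈ range (n + 1), c i * x ⟨2, by omega⟩ ^ i) / (1 - ∏ i, x i))
      =ᵐ[(volume : MeasureTheory.Measure (Fin s → ℝ))] fun x => ∑' k, Gfn n c s k x := by
  set i0 : Fin s := ⟨0, by omega⟩ with hi0
  have hbad : (volume : Measure (Fin s → ℝ))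
      (Set.univ.pi (fun i : Fin s => if i = i0 then ({1} : Set ℝ) else Set.univ)) = 0 := by
    rw [MeasureTheory.volume_pi, MeasureTheory.Measure.pi_pi]
    apply Finset.prod_eq_zero (Finset.mem_univ i0)
    simp
  have hae : ∀ᵐ x : Fin s → ℝ,
      x ∉ Set.univ.pi (fun i : Fin s => if i = i0 then ({1} : Set ℝ) else Set.univ) :=
    MeasureTheory.measure_eq_zero_iff_ae_notMem.mp hbad
  filter_upwards [hae] with x hx
  have hx0 : x i0 ≠ 1 := by
    intro h
    apply hx
    intro i _
    by_cases hii : i = i0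
    · simp [hii, h]
    · simp [hii]
  by_cases hmem : x ∈ Set.Icc (0 : Fin s → ℝ) 1
  · have hcoord : ∀ i, x i ∈ Set.Icc (0:ℝ) 1 :=
      fun i => Set.mem_Icc.mpr ⟨hmem.1 i, hmem.2 i⟩
    set r : ℝ := ∏ i, x i with hr
    have hr0 : 0 ≤ r := Finset.prod_nonneg fun i _ => (hcoord i).1
    have hr1 : r ≤ 1 := Finset.prod_le_one (fun i _ => (hcoord i).1) (fun i _ => (hcoord i).2)
    have hrne : r ≠ 1 := by
      intro hcon
      apply hx0
      have hsplit : r = x i0 * ∏ i ∈ Finset.univ.erase i0, x i :=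
        (Finset.mul_prod_erase Finset.univ x (Finset.mem_univ i0)).symm
      have hrest0 : 0 ≤ ∏ i ∈ Finset.univ.erase i0, x i :=
        Finset.prod_nonneg fun i _ => (hcoord i).1
      have hrest1 : ∏ i ∈ Finset.univ.erase i0, x i ≤ 1 :=
        Finset.prod_le_one (fun i _ => (hcoord i).1) (fun i _ => (hcoord i).2)
      have hxi0le := (hcoord i0).2
      nlinarith [(hcoord i0).1]
    have hrlt : r < 1 := lt_of_le_of_ne hr1 hrne
    rw [Set.indicator_of_mem hmem]
    have hGfn : ∀ k, Gfn n c s k x = (∏ i, baseFn n c i (x i)) * r ^ k := by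
      intro k
      unfold Gfn Hfn
      have : ∀ i : Fin s, (Set.Icc (0:ℝ) 1).indicator
          (fun y => baseFn n c i y * y^k) (x i) = baseFn n c i (x i) * (x i)^k :=
        fun i => Set.indicator_of_mem (hcoord i) _
      rw [Finset.prod_congr rfl (fun i _ => this i), Finset.prod_mul_distrib,
        Finset.prod_pow]
    have hprod3 : ∏ i, baseFn n c i (x i)
        = shiftedLegendre n (x ⟨0, by omega⟩) * (1 - x ⟨1, by omega⟩) ^ n *
          (∑ i ∈ range (n + 1), c i * x ⟨2, by omega⟩ ^ i) := by
      have := prod_three hs (fun i => baseFn n c i (x i)) (by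
        intro i hi
        have h0 : ¬ ((i:ℕ) = 0) := by omega
        have h1 : ¬ ((i:ℕ) = 1) := by omega
        have h2 : ¬ ((i:ℕ) = 2) := by omega
        simp [baseFn, h0, h1, h2])
      rw [this]
      congr 1
    simp only [hGfn]
    rw [tsum_mul_left, tsum_geometric_of_lt_one hr0 hrlt, hprod3]
    rw [div_eq_mul_inv]
  · rw [Set.indicator_of_notMem hmem]
    have hbadcoord : ∃ i, x i ∉ Set.Icc (0:ℝ) 1 := by
      by_contra hc
      push_neg at hc
      exact hmem (Set.mem_Icc.mpr ⟨fun i => (hc i).1, fun i => (hc i).2⟩)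
    obtain ⟨i, hi⟩ := hbadcoord
    have : ∀ k, Gfn n c s k x = 0 := by
      intro k
      unfold Gfn Hfn
      exact Finset.prod_eq_zero (Finset.mem_univ i) (Set.indicator_of_notMem hi _)
    simp only [this, tsum_zero]

/-- For `n ≥ 1`, `s ≥ 3`, `P_n` the shifted Legendre polynomial, `Q_n(x) = (1-x)^n` and
`T_n(x) = ∑ cᵢ xⁱ` with `c* = max_{0≤i≤n} |cᵢ|`, the `s`-fold integral
`I_s = ∫⋯∫ P_n(x₁)Q_n(x₂)T_n(x₃)/(1-x₁⋯x_s) dx₁⋯dx_s` satisfies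
`|I_s| ≤ (c*/2) B(n, n+1)`. -/
theorem stmt_16 (n s : ℕ) (hn : 1 ≤ n) (hs : 3 ≤ s) (c : ℕ → ℝ) :
    |∫ x in Set.Icc (0 : Fin s → ℝ) 1,
        shiftedLegendre n (x ⟨0, by omega⟩) * (1 - x ⟨1, by omega⟩) ^ n *
          (∑ i ∈ range (n + 1), c i * x ⟨2, by omega⟩ ^ i) /
          (1 - ∏ i, x i)| ≤
      ((range (n + 1)).sup' (by simp) fun i => |c i|) / 2 * eulerBeta n (n + 1) := by
  set cstar : ℝ := (range (n + 1)).sup' (by simp) fun i => |c i| with hcstar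
  have hstar : ∀ j ∈ range (n+1), |c j| ≤ cstar := by
    intro j hj
    rw [hcstar]
    exact Finset.le_sup' (fun i => |c i|) hj
  have hcs0 : 0 ≤ cstar := le_trans (abs_nonneg (c 0)) (hstar 0 (by simp))
  have hB : eulerBeta n (n+1) = ((n-1).factorial * n.factorial / (2*n).factorial : ℝ) :=
    eulerBeta_nat n hn
  have hB0 : 0 ≤ eulerBeta n (n+1) := by rw [hB]; positivity
  -- Step A : the integral equals the sum of the integrals of the Gfn
  have keyA : ∫ x in Set.Icc (0 : Fin s → ℝ) 1,
        shiftedLegendre n (x ⟨0, by omega⟩) * (1 - x ⟨1, by omega⟩) ^ n *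
          (∑ i ∈ range (n + 1), c i * x ⟨2, by omega⟩ ^ i) /
          (1 - ∏ i, x i)
      = ∑' k, ∫ x : Fin s → ℝ, Gfn n c s k x := by
    rw [← MeasureTheory.integral_indicator measurableSet_Icc]
    rw [MeasureTheory.integral_congr_ae (indicator_ae n c s hs)]
    exact (MeasureTheory.integral_tsum_of_summable_integral_norm
      (fun k => Gfn_integrable n c s k) (Gfn_summable n c s hs)).symm
  rw [keyA]
  -- the comparison sequence
  set v : ℕ → ℝ := fun k => if n ≤ k then (1/((k:ℝ)+1) - 1/((k:ℝ)+2)) else 0 with hv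
  have hv0 : ∀ k, 0 ≤ v k := by
    intro k
    simp only [hv]
    split_ifs
    · have h1 : (0:ℝ) < (k:ℝ)+1 := by positivity
      have h2 : ((k:ℝ)+1) ≤ (k:ℝ)+2 := by linarith
      have := one_div_le_one_div_of_le h1 h2
      linarith
    · exact le_rfl
  have hvshift : (fun j : ℕ => v (j + n)) = fun j : ℕ => 1/((n:ℝ)+j+1) - 1/((n:ℝ)+j+2) := by
    funext j
    rw [hv]
    simp only [if_pos (Nat.le_add_left n j)]
    push_cast
    ring_nf
  have hvsum : Summable v := by
    apply (summable_nat_add_iff n).mp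
    rw [hvshift]
    exact (telescoping n).summable
  have hvtsum : ∑' k, v k = 1/((n:ℝ)+1) := by
    rw [← Summable.sum_add_tsum_nat_add n hvsum]
    have h1 : ∑ i ∈ range n, v i = 0 := by
      apply Finset.sum_eq_zero
      intro i hi
      have hilt : i < n := Finset.mem_range.mp hi
      simp only [hv]
      rw [if_neg (by omega : ¬ n ≤ i)]
    have h2 : ∑' j, v (j + n) = 1/((n:ℝ)+1) := by
      rw [show (fun j : ℕ => v (j + n)) = fun j : ℕ => 1/((n:ℝ)+j+1) - 1/((n:ℝ)+j+2) from hvshift]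
      exact (telescoping n).tsum_eq
    rw [h1, h2, zero_add]
  set w : ℕ → ℝ := fun k => cstar / 2 * eulerBeta n (n+1) * ((n:ℝ)+1) * v k with hw
  have hw0 : ∀ k, 0 ≤ w k := fun k => by
    rw [hw]
    apply mul_nonneg (mul_nonneg (mul_nonneg (by positivity) hB0) (by positivity)) (hv0 k)
  have hwsum : Summable w := hvsum.mul_left _
  -- per-term bound
  have hterm : ∀ k, |∫ x : Fin s → ℝ, Gfn n c s k x| ≤ w k := by
    intro k
    rw [Gfn_int, Finset.abs_prod]
    by_cases hk : n ≤ k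
    · -- main case
      have hfac : (0:ℝ) < ((k+n+1).factorial : ℝ) := by positivity
      set Bk : ℝ := (k.factorial * n.factorial : ℝ) / (k+n+1).factorial with hBk
      have hBk0 : 0 ≤ Bk := by positivity
      set u : Fin s → ℝ := fun i => if (i:ℕ) = 0 then (k.choose n : ℝ) * Bk
        else if (i:ℕ) = 1 then Bk
        else if (i:ℕ) = 2 then cstar * ((n:ℝ)+1) * (1/((k:ℝ)+1)) else 1 with hu
      have hple : ∏ i : Fin s, |∫ y : ℝ, Hfn n c k i y| ≤ ∏ i, u i := by
        apply Finset.prod_le_prod (fun i _ => abs_nonneg _)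
        intro i _
        simp only [hu]
        by_cases h0 : (i:ℕ) = 0
        · rw [if_pos h0, Hfn_int_i0 n c k i h0, show n + (k - n) = k by omega]
          rw [abs_mul, abs_mul, abs_pow, abs_neg, abs_one, one_pow, one_mul,
            Nat.abs_cast, beta_nat n k, abs_of_nonneg hBk0]
        · by_cases h1 : (i:ℕ) = 1
          · rw [if_neg h0, if_pos h1, Hfn_int_i1 n c k i h1, abs_of_nonneg hBk0]
          · by_cases h2 : (i:ℕ) = 2
            · rw [if_neg h0, if_neg h1, if_pos h2]
              exact Hfn_int_i2 n c k i h2 cstar hstar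
            · rw [if_neg h0, if_neg h1, if_neg h2]
              rw [Hfn_int_other n c k i (by omega)]
              rw [abs_of_nonneg (by positivity)]
              rw [div_le_one (by positivity)]
              linarith [Nat.cast_nonneg (α := ℝ) k]
      have huval : ∏ i, u i
          = ((k.choose n : ℝ) * Bk) * Bk * (cstar * ((n:ℝ)+1) * (1/((k:ℝ)+1))) := by
        rw [prod_three hs u (by
          intro i hi
          rw [hu]
          have h0 : ¬ ((i:ℕ) = 0) := by omega
          have h1 : ¬ ((i:ℕ) = 1) := by omega
          have h2 : ¬ ((i:ℕ) = 2) := by omega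
          simp [h0, h1, h2])]
        rw [hu]
        norm_num
      have hkey := key_real n k hn hk
      have hwk : w k = cstar / 2 * eulerBeta n (n+1) * ((n:ℝ)+1)
          * (1/((k:ℝ)+1) - 1/((k:ℝ)+2)) := by
        rw [hw, hv]
        simp only [if_pos hk]
      calc ∏ i : Fin s, |∫ y : ℝ, Hfn n c k i y| ≤ ∏ i, u i := hple
        _ = ((k.choose n : ℝ) * Bk * Bk * ((k:ℝ)+2))
              * (cstar * ((n:ℝ)+1) * (1/(((k:ℝ)+1) * ((k:ℝ)+2)))) := by
            rw [huval]
            field_simp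
        _ ≤ (((n-1).factorial * n.factorial / (2*n).factorial : ℝ) / 2)
              * (cstar * ((n:ℝ)+1) * (1/(((k:ℝ)+1) * ((k:ℝ)+2)))) := by
            apply mul_le_mul_of_nonneg_right hkey (by positivity)
        _ = w k := by
            rw [hwk, hB]
            have hk1 : ((k:ℝ)+1) ≠ 0 := by positivity
            have hk2 : ((k:ℝ)+2) ≠ 0 := by positivity
            field_simp
            ring
    · -- k < n : the first factor vanishes
      have hch : (k.choose n : ℝ) = 0 := by
        rw [Nat.choose_eq_zero_of_lt (by omega)]
        norm_num
      have hzero : |∫ y : ℝ, Hfn n c k (⟨0, by omega⟩ : Fin s) y| = 0 := by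
        rw [Hfn_int_i0 n c k _ rfl, hch]
        simp
      calc ∏ i : Fin s, |∫ y : ℝ, Hfn n c k i y| = 0 :=
            Finset.prod_eq_zero (Finset.mem_univ (⟨0, by omega⟩ : Fin s)) hzero
        _ ≤ w k := hw0 k
  -- assemble
  have hsummable_int : Summable (fun k => ∫ x : Fin s → ℝ, Gfn n c s k x) := by
    apply Summable.of_norm_bounded (Gfn_summable n c s hs)
    intro k
    exact MeasureTheory.norm_integral_le_integral_norm _
  calc |∑' k, ∫ x : Fin s → ℝ, Gfn n c s k x|
      ≤ ∑' k, |∫ x : Fin s → ℝ, Gfn n c s k x| := by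
        have hns : Summable (fun k => ‖∫ x : Fin s → ℝ, Gfn n c s k x‖) := by
          simpa [Real.norm_eq_abs] using hsummable_int.abs
        have := norm_tsum_le_tsum_norm hns
        simpa [Real.norm_eq_abs] using this
    _ ≤ ∑' k, w k := Summable.tsum_le_tsum hterm hsummable_int.abs hwsum
    _ = cstar / 2 * eulerBeta n (n+1) * ((n:ℝ)+1) * (1/((n:ℝ)+1)) := by
        rw [hw, tsum_mul_left, hvtsum]
    _ = cstar / 2 * eulerBeta n (n+1) := by
        have : ((n:ℝ)+1) ≠ 0 := by positivity
        field_simp
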